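/- For every real λ > 1, defining κ := (√(λ²+1)·√(λ²-4√2+5) - 2(√2-1)λ)/(λ²-1), the strict inequalities 1/λ < 1/(λκ) < 2λ/(λ²+1) hold; in particular 1/λ < κ < 1. -/

import Mathlib

open Real

set_option maxHeartbeats 1000000

/-- For every `λ > 1`, with
`κ = (√(λ²+1)·√(λ²-4√2+5) - 2(√2-1)λ)/(λ²-1)`, we have
`1/λ < 1/(λκ) < 2λ/(λ²+1)`, and in particular `1/λ < κ < 1`. -/
theorem kappa_bounds (lam : ℝ) (hlam : 1 < lam)
    (κ : ℝ)
    (hκ : κ = (Real.sqrt (lam ^ 2 + 1) * Real.sqrt (lam ^ 2 - 4 * Real.sqrt 2 + 5)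
        - 2 * (Real.sqrt 2 - 1) * lam) / (lam ^ 2 - 1)) :
    1 / lam < 1 / (lam * κ) ∧ 1 / (lam * κ) < 2 * lam / (lam ^ 2 + 1)
      ∧ 1 / lam < κ ∧ κ < 1 := by
  set s := Real.sqrt 2 with hsdef
  have hs2 : s ^ 2 = 2 := Real.sq_sqrt (by norm_num)
  have hs0 : 0 ≤ s := Real.sqrt_nonneg 2
  have hs1 : 1 < s := by nlinarith
  have hs15 : s < 3 / 2 := by nlinarith
  have hlam0 : 0 < lam := lt_trans one_pos hlam
  have hlam1 : 0 < lam - 1 := by linarith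
  have hd : 0 < lam ^ 2 - 1 := by nlinarith
  have hBnn : (0:ℝ) ≤ lam ^ 2 - 4 * s + 5 := by nlinarith
  set A := Real.sqrt (lam ^ 2 + 1) with hA
  set B := Real.sqrt (lam ^ 2 - 4 * s + 5) with hB
  have hA2 : A ^ 2 = lam ^ 2 + 1 := Real.sq_sqrt (by positivity)
  have hB2 : B ^ 2 = lam ^ 2 - 4 * s + 5 := Real.sq_sqrt hBnn
  set P := A * B with hPdef
  have hPnn : 0 ≤ P := mul_nonneg (Real.sqrt_nonneg _) (Real.sqrt_nonneg _)
  have hP2 : P ^ 2 = (lam ^ 2 + 1) * (lam ^ 2 - 4 * s + 5) := by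
    rw [hPdef, mul_pow, hA2, hB2]
  have hκd : κ * (lam ^ 2 - 1) = P - 2 * (s - 1) * lam := by
    rw [hκ]; field_simp
  -- inequality 1 : P < lam^2 - 1 + 2 (s-1) lam   (gives κ < 1)
  have key1 : P < lam ^ 2 - 1 + 2 * (s - 1) * lam := by
    have hR : 0 < lam ^ 2 - 1 + 2 * (s - 1) * lam := by nlinarith
    have hid : (lam ^ 2 - 1 + 2 * (s - 1) * lam) ^ 2
        = P ^ 2 + 4 * (s - 1) * (lam - 1) ^ 2 * (lam + 1) := by
      linear_combination -hP2 + 4 * lam ^ 2 * hs2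
    have hpos : 0 < 4 * (s - 1) * (lam - 1) ^ 2 * (lam + 1) := by
      have h1 : 0 < s - 1 := by linarith
      have h2 : 0 < (lam - 1) ^ 2 := pow_pos hlam1 2
      have h3 : 0 < lam + 1 := by linarith
      positivity
    have hsq : P ^ 2 < (lam ^ 2 - 1 + 2 * (s - 1) * lam) ^ 2 := by
      rw [hid]; linarith
    exact lt_of_pow_lt_pow_left₀ 2 hR.le hsq
  -- inequality 2 : lam * P > lam^2 - 1 + 2 (s-1) lam^2  (gives lam*κ > 1)
  have key2 : lam ^ 2 - 1 + 2 * (s - 1) * lam ^ 2 < lam * P := by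
    have hR : 0 < lam ^ 2 - 1 + 2 * (s - 1) * lam ^ 2 := by nlinarith
    have hid : (lam * P) ^ 2
        = (lam ^ 2 - 1 + 2 * (s - 1) * lam ^ 2) ^ 2 + (lam ^ 2 - 1) ^ 3 := by
      linear_combination lam ^ 2 * hP2 - 4 * lam ^ 4 * hs2
    have hpos : 0 < (lam ^ 2 - 1) ^ 3 := pow_pos hd 3
    have hsq : (lam ^ 2 - 1 + 2 * (s - 1) * lam ^ 2) ^ 2 < (lam * P) ^ 2 := by
      rw [hid]; linarith
    exact lt_of_pow_lt_pow_left₀ 2 (mul_nonneg hlam0.le hPnn) hsq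
  -- inequality 3 : 2 lam^2 P > lam^4 - 1 + 4 (s-1) lam^3
  have key3 : lam ^ 4 - 1 + 4 * (s - 1) * lam ^ 3 < 2 * lam ^ 2 * P := by
    have hR : 0 < lam ^ 4 - 1 + 4 * (s - 1) * lam ^ 3 := by nlinarith
    have hid : (2 * lam ^ 2 * P) ^ 2
        = (lam ^ 4 - 1 + 4 * (s - 1) * lam ^ 3) ^ 2
          + (lam - 1) ^ 3 * (3 * lam ^ 5 + (17 - 8 * s) * lam ^ 4
              + (18 - 8 * s) * lam ^ 3 + 6 * lam ^ 2 + 3 * lam + 1) := by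
      linear_combination 4 * lam ^ 4 * hP2 - 16 * lam ^ 6 * hs2
    have hpos : 0 < (lam - 1) ^ 3 * (3 * lam ^ 5 + (17 - 8 * s) * lam ^ 4
        + (18 - 8 * s) * lam ^ 3 + 6 * lam ^ 2 + 3 * lam + 1) := by
      apply mul_pos (pow_pos hlam1 3)
      nlinarith [mul_pos (show (0:ℝ) < 17 - 8 * s by linarith) (pow_pos hlam0 4),
        mul_pos (show (0:ℝ) < 18 - 8 * s by linarith) (pow_pos hlam0 3),
        pow_pos hlam0 5, pow_pos hlam0 2]
    have hsq : (lam ^ 4 - 1 + 4 * (s - 1) * lam ^ 3) ^ 2 < (2 * lam ^ 2 * P) ^ 2 := by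
      rw [hid]; linarith
    exact lt_of_pow_lt_pow_left₀ 2 (mul_nonneg (by positivity : (0:ℝ) ≤ 2 * lam ^ 2) hPnn) hsq
  -- now derive the statements
  have hκ1 : κ < 1 := by
    have h1 : κ * (lam ^ 2 - 1) < 1 * (lam ^ 2 - 1) := by rw [hκd, one_mul]; linarith
    exact (mul_lt_mul_iff_left₀ hd).mp h1
  have hlκ : 1 < lam * κ := by
    have h1 : 1 * (lam ^ 2 - 1) < (lam * κ) * (lam ^ 2 - 1) := by
      rw [one_mul, mul_assoc, hκd]
      have hexp : lam * (P - 2 * (s - 1) * lam) = lam * P - 2 * (s - 1) * lam ^ 2 := by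
        ring
      rw [hexp]; linarith
    exact (mul_lt_mul_iff_left₀ hd).mp h1
  have hκpos : 0 < κ := by
    rcases le_or_gt κ 0 with h | h
    · exfalso
      have : lam * κ ≤ 0 := mul_nonpos_of_nonneg_of_nonpos hlam0.le h
      linarith
    · exact h
  have hlκpos : 0 < lam * κ := by linarith
  have hκlam : 1 / lam < κ := by
    rw [div_lt_iff₀ hlam0]
    calc 1 < lam * κ := hlκ
    _ = κ * lam := by ring
  have h2κ : lam ^ 2 + 1 < 2 * lam ^ 2 * κ := by
    have h1 : (lam ^ 2 + 1) * (lam ^ 2 - 1) < (2 * lam ^ 2 * κ) * (lam ^ 2 - 1) := by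
      rw [mul_assoc, hκd]
      have hexp : 2 * lam ^ 2 * (P - 2 * (s - 1) * lam)
          = 2 * lam ^ 2 * P - 4 * (s - 1) * lam ^ 3 := by ring
      have hexp2 : (lam ^ 2 + 1) * (lam ^ 2 - 1) = lam ^ 4 - 1 := by ring
      rw [hexp, hexp2]; linarith
    exact (mul_lt_mul_iff_left₀ hd).mp h1
  refine ⟨?_, ?_, hκlam, hκ1⟩
  · rw [div_lt_div_iff₀ hlam0 hlκpos]
    have : lam * κ < lam * 1 := by
      exact mul_lt_mul_of_pos_left hκ1 hlam0
    linarith [this]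
  · rw [div_lt_div_iff₀ hlκpos (by positivity)]
    have hexp : 2 * lam * (lam * κ) = 2 * lam ^ 2 * κ := by ring
    rw [one_mul, hexp]; exact h2κ
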